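/- Let ψ(z) = z - 1/z, λ_n and ρ_{n,N} as above. For 1 ≤ N ≤ n and 0 < c ≤ 1, the (n−N)-fold iterate ψ^{∘(n-N)} maps the open disc D(λ_n, c ρ_{n,N}) into the open disc D(λ_N, c λ_N) (and in particular avoids 0 at every intermediate step). -/

import Mathlib

noncomputable def lam : ℕ → ℝ
  | 0 => 0
  | n + 1 => (lam n + Real.sqrt (lam n ^ 2 + 4)) / 2

noncomputable def psiC (z : ℂ) : ℂ := z - 1 / z

lemma lam_nonneg (n : ℕ) : 0 ≤ lam n := by
  induction n with
  | zero => simp [lam]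
  | succ n ih =>
    simp only [lam]
    positivity

lemma lam_one_le (n : ℕ) : 1 ≤ lam (n + 1) := by
  have h1 : Real.sqrt 4 ≤ Real.sqrt (lam n ^ 2 + 4) := by
    apply Real.sqrt_le_sqrt; nlinarith [sq_nonneg (lam n)]
  have h2 : Real.sqrt 4 = 2 := by
    rw [show (4:ℝ) = 2^2 by norm_num, Real.sqrt_sq (by norm_num)]
  have := lam_nonneg n
  simp only [lam]
  linarith

lemma lam_succ_pos (n : ℕ) : 0 < lam (n + 1) := lt_of_lt_of_le one_pos (lam_one_le n)

lemma lam_sq (n : ℕ) : lam (n + 1) ^ 2 = lam n * lam (n + 1) + 1 := by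
  have hs : Real.sqrt (lam n ^ 2 + 4) ^ 2 = lam n ^ 2 + 4 := by
    rw [Real.sq_sqrt]; nlinarith [sq_nonneg (lam n)]
  simp only [lam]
  nlinarith [hs]

lemma lam_sub_inv (n : ℕ) : lam (n + 1) - 1 / lam (n + 1) = lam n := by
  have h := lam_sq n
  have hp := lam_succ_pos n
  field_simp
  nlinarith

lemma lam_lt_succ (n : ℕ) : lam n < lam (n + 1) := by
  have h := lam_sub_inv n
  have hp := lam_succ_pos n
  have : 0 < 1 / lam (n + 1) := by positivity
  linarith

lemma lam_strictMono : StrictMono lam := strictMono_nat_of_lt_succ lam_lt_succ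

lemma psi_eq (m : ℕ) (z : ℂ) (hz : z ≠ 0) :
    psiC z - (lam m : ℂ) = (z - lam (m + 1)) * (1 + 1 / (z * lam (m + 1))) := by
  have hp : (lam (m + 1) : ℂ) ≠ 0 := by
    exact_mod_cast (lam_succ_pos m).ne'
  have h : (lam m : ℂ) = (lam (m + 1) : ℂ) - 1 / (lam (m + 1) : ℂ) := by
    have := lam_sub_inv m
    push_cast [← this]
    ring
  rw [h, psiC]
  field_simp
  ring

lemma real_identity (j m : ℕ) :
    lam m - lam j = (lam (m + 1) - lam (j + 1)) * (1 + 1 / (lam (j + 1) * lam (m + 1))) := by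
  have hj := lam_succ_pos j
  have hm := lam_succ_pos m
  rw [← lam_sub_inv m, ← lam_sub_inv j]
  field_simp
  ring

lemma key (N : ℕ) (hN : 1 ≤ N) (c : ℝ) (hc0 : 0 < c) (hc1 : c ≤ 1) :
    ∀ j, ∀ z : ℂ, ‖z - lam (N + j)‖ < c * (lam (N + j) - lam j) →
      (∀ k < j, psiC^[k] z ≠ 0) ∧ ‖psiC^[j] z - lam N‖ < c * lam N := by
  intro j
  induction j with
  | zero =>
    intro z hz
    refine ⟨fun k hk => absurd hk (by omega), ?_⟩
    simpa [lam] using hz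
  | succ j ih =>
    intro z hz
    set L := lam (N + j + 1) with hL
    set a := lam (j + 1) with ha
    have ha1 : 1 ≤ a := lam_one_le j
    have ha0 : 0 < a := by linarith
    have hL0 : 0 < L := lam_succ_pos (N + j)
    have hLa : a < L := lam_strictMono (by omega : j + 1 < N + j + 1)
    have hzla : ‖z - L‖ < c * (L - a) := by
      simpa [hL, ha, show N + (j + 1) = N + j + 1 by omega] using hz
    -- |z| > a
    have habsz : a < ‖z‖ := by
      have h1 : ‖(L : ℂ)‖ - ‖z‖ ≤ ‖(L : ℂ) - z‖ := by
        have := norm_sub_norm_le (L : ℂ) z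
        simpa using this
      have h2 : ‖(L : ℂ) - z‖ = ‖z - L‖ := by
        exact norm_sub_rev _ _
      have h3 : ‖(L : ℂ)‖ = L := by
        rw [Complex.norm_real, Real.norm_of_nonneg hL0.le]
      have h4 : c * (L - a) ≤ L - a := by nlinarith
      linarith [hzla]
    have hz0 : z ≠ 0 := by
      intro h; rw [h] at habsz; simp at habsz; linarith
    -- estimate for psiC z
    have hstep : ‖psiC z - lam (N + j)‖ < c * (lam (N + j) - lam j) := by
      rw [psi_eq (N + j) z hz0, norm_mul]
      have hLc : (L : ℂ) ≠ 0 := by exact_mod_cast hL0.ne'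
      have hfac : ‖1 + 1 / (z * L)‖ ≤ 1 + 1 / (a * L) := by
        calc ‖1 + 1 / (z * L)‖ ≤ 1 + ‖1 / (z * L)‖ := by
              simpa using norm_add_le (1 : ℂ) (1 / (z * L))
          _ = 1 + 1 / (‖z‖ * L) := by
              rw [norm_div, norm_mul, norm_one]
              congr 2
              rw [Complex.norm_real, Real.norm_of_nonneg hL0.le]
          _ ≤ 1 + 1 / (a * L) := by
              have : a * L ≤ ‖z‖ * L := by nlinarith
              have h0 : 0 < a * L := by positivity
              gcongr
      have hpos : 0 < 1 + 1 / (a * L) := by positivity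
      calc ‖z - L‖ * ‖1 + 1 / (z * L)‖
          ≤ ‖z - L‖ * (1 + 1 / (a * L)) := by
            apply mul_le_mul_of_nonneg_left hfac (norm_nonneg _)
        _ < c * (L - a) * (1 + 1 / (a * L)) := by
            apply mul_lt_mul_of_pos_right hzla hpos
        _ = c * (lam (N + j) - lam j) := by
            rw [real_identity j (N + j)]; ring
    obtain ⟨h1, h2⟩ := ih (psiC z) hstep
    constructor
    · intro k hk
      match k with
      | 0 => simpa using hz0
      | k + 1 =>
        rw [Function.iterate_succ_apply]
        exact h1 k (by omega)
    · rw [Function.iterate_succ_apply]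
      exact h2

theorem stmt_13 (N n : ℕ) (hN : 1 ≤ N) (hn : N ≤ n) (c : ℝ) (hc0 : 0 < c) (hc1 : c ≤ 1)
    (z : ℂ) (hz : ‖z - lam n‖ < c * (lam n - lam (n - N))) :
    (∀ k < n - N, psiC^[k] z ≠ 0) ∧
      ‖psiC^[n - N] z - lam N‖ < c * lam N := by
  have hn' : n = N + (n - N) := by omega
  have hj : n - N = n - N := rfl
  apply key N hN c hc0 hc1 (n - N) z
  rw [← hn']
  exact hz
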